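/- Fix an integer n ≥ 1 and distinct positive real numbers β_1, …, β_{n+1}. Then there exist ε > 0 and continuously differentiable functions x_1, …, x_n : (β_{n+1} − ε, β_{n+1} + ε) → ℝ such that x_j(β_{n+1}) = β_j for j = 1, …, n, the first n odd power sums are preserved, i.e. Σ_{j=1}^{n} x_j(t)^{2k+1} + t^{2k+1} = Σ_{j=1}^{n+1} β_j^{2k+1} for every k = 1, …, n and every t in the interval, and the (n+1)st odd power sum has derivative (d/dt)[ Σ_{j=1}^{n} x_j(t)^{2n+3} + t^{2n+3} ] evaluated at t = β_{n+1} equal to (2n+3) β_{n+1}² Π_{j=1}^{n} ( β_{n+1}² − β_j² ), which is nonzero. -/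

import Mathlib

open Finset Set Topology Filter


lemma key_alg {n : ℕ} (u : Fin n → ℝ) (w : ℝ) (D : Fin n → ℝ)
    (hroot : ∀ k : ℕ, 1 ≤ k → k ≤ n → ∑ j, u j ^ k * D j = -(w ^ k)) :
    (∑ j, u j ^ (n + 1) * D j) + w ^ (n + 1) = w * ∏ j, (w - u j) := by
  have hexp : ∀ v : ℝ, v * ∏ i, (v - u i) =
      ∑ t ∈ (univ : Finset (Fin n)).powerset,
        (∏ i ∈ t, (-u i)) * v ^ (n - t.card + 1) := by
    intro v
    have h1 : ∏ i, (v - u i) = ∑ t ∈ (univ : Finset (Fin n)).powerset,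
        (∏ i ∈ t, (-u i)) * v ^ (n - t.card) := by
      calc ∏ i, (v - u i) = ∏ i, ((-u i) + v) :=
            Finset.prod_congr rfl fun i _ => by ring
        _ = ∑ t ∈ (univ : Finset (Fin n)).powerset,
              (∏ i ∈ t, (-u i)) * ∏ _i ∈ univ \ t, v := Finset.prod_add _ _ _
        _ = _ := by
            refine Finset.sum_congr rfl fun t ht => ?_
            rw [Finset.prod_const, Finset.card_sdiff_of_subset (Finset.mem_powerset.mp ht), card_univ,
              Fintype.card_fin]
    rw [h1, Finset.mul_sum]
    exact Finset.sum_congr rfl fun t _ => by ring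
  have hzero : ∑ j, D j * (u j * ∏ i, (u j - u i)) = 0 := by
    refine Finset.sum_eq_zero fun j _ => ?_
    rw [Finset.prod_eq_zero (Finset.mem_univ j) (sub_self (u j))]
    ring
  have h2 : ∑ t ∈ (univ : Finset (Fin n)).powerset,
      (∏ i ∈ t, (-u i)) * ∑ j, u j ^ (n - t.card + 1) * D j = 0 := by
    rw [← hzero]
    calc ∑ t ∈ (univ : Finset (Fin n)).powerset,
          (∏ i ∈ t, (-u i)) * ∑ j, u j ^ (n - t.card + 1) * D j
        = ∑ t ∈ (univ : Finset (Fin n)).powerset,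
            ∑ j, (∏ i ∈ t, (-u i)) * (u j ^ (n - t.card + 1) * D j) := by
          simp [Finset.mul_sum]
      _ = ∑ j, ∑ t ∈ (univ : Finset (Fin n)).powerset,
            (∏ i ∈ t, (-u i)) * (u j ^ (n - t.card + 1) * D j) := Finset.sum_comm
      _ = ∑ j, D j * (u j * ∏ i, (u j - u i)) := by
          refine Finset.sum_congr rfl fun j _ => ?_
          rw [hexp (u j), Finset.mul_sum]
          exact Finset.sum_congr rfl fun t _ => by ring
  have hmem : (∅ : Finset (Fin n)) ∈ (univ : Finset (Fin n)).powerset :=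
    Finset.empty_mem_powerset _
  have hsplit2 := (Finset.add_sum_erase _
    (fun t => (∏ i ∈ t, (-u i)) * ∑ j, u j ^ (n - t.card + 1) * D j) hmem).trans h2
  simp only [Finset.prod_empty, Finset.card_empty, Nat.sub_zero, one_mul] at hsplit2
  have hw := hexp w
  rw [← Finset.add_sum_erase _
    (fun t => (∏ i ∈ t, (-u i)) * w ^ (n - t.card + 1)) hmem] at hw
  simp only [Finset.prod_empty, Finset.card_empty, Nat.sub_zero, one_mul] at hw
  have hrepl : ∑ t ∈ ((univ : Finset (Fin n)).powerset).erase ∅,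
      (∏ i ∈ t, (-u i)) * ∑ j, u j ^ (n - t.card + 1) * D j
      = -∑ t ∈ ((univ : Finset (Fin n)).powerset).erase ∅,
      (∏ i ∈ t, (-u i)) * w ^ (n - t.card + 1) := by
    rw [← Finset.sum_neg_distrib]
    refine Finset.sum_congr rfl fun t ht => ?_
    have ht' : t ≠ ∅ := (Finset.mem_erase.mp ht).1
    have hc1 : 1 ≤ t.card := Finset.card_pos.mpr (Finset.nonempty_iff_ne_empty.mpr ht')
    have hc2 : t.card ≤ n := by
      simpa using Finset.card_le_univ t
    rw [hroot (n - t.card + 1) (by omega) (by omega)]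
    ring
  rw [hrepl] at hsplit2
  linarith [hw, hsplit2]


section helpers
variable {n : ℕ}

-- the derivative candidate for component k of the constraint map
noncomputable def Lcomp (a : Fin n → ℝ) (b : ℝ) (k : Fin n) :
    ((Fin n → ℝ) × ℝ) →L[ℝ] ℝ :=
  (∑ j, ((((2 * (k : ℕ) + 3 : ℕ)) : ℝ) * a j ^ (2 * (k : ℕ) + 3 - 1)) •
      ((ContinuousLinearMap.proj j).comp (ContinuousLinearMap.fst ℝ (Fin n → ℝ) ℝ))) +
    ((((2 * (k : ℕ) + 3 : ℕ)) : ℝ) * b ^ (2 * (k : ℕ) + 3 - 1)) •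
      (ContinuousLinearMap.snd ℝ (Fin n → ℝ) ℝ)

noncomputable def Lmap (a : Fin n → ℝ) (b : ℝ) :
    ((Fin n → ℝ) × ℝ) →L[ℝ] ((Fin n → ℝ) × ℝ) :=
  (ContinuousLinearMap.pi (Lcomp a b)).prod (ContinuousLinearMap.snd ℝ (Fin n → ℝ) ℝ)

noncomputable def Gmap (n : ℕ) : ((Fin n → ℝ) × ℝ) → ((Fin n → ℝ) × ℝ) :=
  fun p => (fun k => (∑ j, p.1 j ^ (2 * (k : ℕ) + 3)) + p.2 ^ (2 * (k : ℕ) + 3), p.2)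

lemma contDiff_Gmap : ContDiff ℝ 1 (Gmap n) := by
  apply ContDiff.prodMk
  · rw [contDiff_pi]
    intro k
    apply ContDiff.add
    · apply ContDiff.sum
      intro j _
      exact (((ContinuousLinearMap.proj j).comp
        (ContinuousLinearMap.fst ℝ (Fin n → ℝ) ℝ)).contDiff).pow _
    · exact ((ContinuousLinearMap.snd ℝ (Fin n → ℝ) ℝ).contDiff).pow _
  · exact (ContinuousLinearMap.snd ℝ (Fin n → ℝ) ℝ).contDiff

lemma hasFDerivAt_Gmap (a : Fin n → ℝ) (b : ℝ) :
    HasFDerivAt (Gmap n) (Lmap a b) (a, b) := by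
  apply HasFDerivAt.prodMk
  · apply hasFDerivAt_pi.2
    intro k
    apply HasFDerivAt.add
    · apply HasFDerivAt.fun_sum
      intro j _
      exact (hasDerivAt_pow (2 * (k : ℕ) + 3) (a j)).comp_hasFDerivAt (a, b)
        (((ContinuousLinearMap.proj j).comp
          (ContinuousLinearMap.fst ℝ (Fin n → ℝ) ℝ)).hasFDerivAt)
    · exact (hasDerivAt_pow (2 * (k : ℕ) + 3) b).comp_hasFDerivAt (a, b)
        ((ContinuousLinearMap.snd ℝ (Fin n → ℝ) ℝ).hasFDerivAt)
  · exact (ContinuousLinearMap.snd ℝ (Fin n → ℝ) ℝ).hasFDerivAt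

lemma Lmap_injective (a : Fin n → ℝ) (b : ℝ) (ha : ∀ j, 0 < a j)
    (hainj : Function.Injective fun j => a j ^ 2) :
    Function.Injective (Lmap a b) := by
  rw [injective_iff_map_eq_zero]
  rintro ⟨u, s⟩ h
  have hsnd : s = 0 := congrArg Prod.snd h
  have hfst : ∀ k : Fin n,
      (∑ j, (((2 * (k : ℕ) + 3 : ℕ) : ℝ) * a j ^ (2 * (k : ℕ) + 3 - 1)) * u j) +
        (((2 * (k : ℕ) + 3 : ℕ) : ℝ) * b ^ (2 * (k : ℕ) + 3 - 1)) * s = 0 := by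
    intro k
    have := congrFun (congrArg Prod.fst h) k
    simpa [Lmap, Lcomp, ContinuousLinearMap.sum_apply] using this
  have hkey : ∀ k : Fin n, ∑ j, (a j ^ 2) ^ (k : ℕ) * (a j ^ 2 * u j) = 0 := by
    intro k
    have h1 := hfst k
    rw [hsnd] at h1
    have h2 : (((2 * (k : ℕ) + 3 : ℕ) : ℝ)) *
        (∑ j, a j ^ (2 * (k : ℕ) + 2) * u j) = 0 := by
      rw [Finset.mul_sum]
      simpa [mul_assoc] using h1
    have h3 : (∑ j, a j ^ (2 * (k : ℕ) + 2) * u j) = 0 := by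
      have : (((2 * (k : ℕ) + 3 : ℕ) : ℝ)) ≠ 0 := by positivity
      exact (mul_eq_zero.mp h2).resolve_left this
    rw [← h3]
    refine Finset.sum_congr rfl fun j _ => ?_
    rw [← pow_mul]
    rw [pow_add]
    ring
  -- Vandermonde
  have hM : (fun j => a j ^ 2 * u j) = 0 := by
    have hdet : ((Matrix.vandermonde fun j => a j ^ 2).transpose).det ≠ 0 := by
      rw [Matrix.det_transpose]
      exact Matrix.det_vandermonde_ne_zero_iff.mpr hainj
    refine Matrix.eq_zero_of_mulVec_eq_zero hdet ?_
    funext k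
    simpa [Matrix.mulVec, Matrix.vandermonde, Matrix.mulVec, dotProduct] using hkey k
  have hu : u = 0 := by
    funext j
    have := congrFun hM j
    simp only [Pi.zero_apply] at this
    have ha2 : a j ^ 2 ≠ 0 := pow_ne_zero _ (ne_of_gt (ha j))
    exact (mul_eq_zero.mp this).resolve_left ha2
  simp [hu, hsnd, Prod.ext_iff]

lemma Gmap_def (n : ℕ) : Gmap n =
    fun p => (fun k : Fin n => (∑ j, p.1 j ^ (2 * (k : ℕ) + 3)) + p.2 ^ (2 * (k : ℕ) + 3), p.2) :=
  rfl

end helpers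

/-- **Implicit-function-theorem perturbation of the amplitude parameters.**
Fix `n ≥ 1` and distinct positive reals `β_1, …, β_{n+1}`.  There exist `ε > 0` and `C¹`
functions `x_1, …, x_n` on `(β_{n+1} - ε, β_{n+1} + ε)` with `x_j(β_{n+1}) = β_j`,
preserving the first `n` odd power sums:
`∑_j x_j(t)^{2k+1} + t^{2k+1} = ∑_j β_j^{2k+1}` for `k = 1, …, n`, and such that the
derivative of `t ↦ ∑_j x_j(t)^{2n+3} + t^{2n+3}` at `t = β_{n+1}` equals
`(2n+3) β_{n+1}² ∏_{j=1}^n (β_{n+1}² - β_j²)`, which is nonzero. -/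
theorem stmt_19 (n : ℕ) (hn : 1 ≤ n) (β : Fin (n + 1) → ℝ)
    (hinj : Function.Injective β) (hpos : ∀ i, 0 < β i) :
    ∃ ε > (0 : ℝ), ∃ x : Fin n → ℝ → ℝ,
      (∀ j, ContDiffOn ℝ 1 (x j)
        (Set.Ioo (β (Fin.last n) - ε) (β (Fin.last n) + ε))) ∧
      (∀ j, x j (β (Fin.last n)) = β j.castSucc) ∧
      (∀ k : ℕ, 1 ≤ k → k ≤ n →
        ∀ t ∈ Set.Ioo (β (Fin.last n) - ε) (β (Fin.last n) + ε),
          (∑ j, x j t ^ (2 * k + 1)) + t ^ (2 * k + 1) = ∑ i, β i ^ (2 * k + 1)) ∧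
      deriv (fun t => (∑ j, x j t ^ (2 * n + 3)) + t ^ (2 * n + 3)) (β (Fin.last n)) =
        (2 * (n : ℝ) + 3) * β (Fin.last n) ^ 2 *
          ∏ j : Fin n, (β (Fin.last n) ^ 2 - β j.castSucc ^ 2) ∧
      (2 * (n : ℝ) + 3) * β (Fin.last n) ^ 2 *
          ∏ j : Fin n, (β (Fin.last n) ^ 2 - β j.castSucc ^ 2) ≠ 0 := by
  classical
  set b : ℝ := β (Fin.last n) with hbdef
  set a : Fin n → ℝ := fun j => β j.castSucc with hadef
  have hapos : ∀ j, 0 < a j := fun j => hpos _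
  have hbpos : 0 < b := hpos _
  have hane : ∀ j, a j ≠ b := by
    intro j h
    exact absurd (hinj h) (Fin.castSucc_lt_last j).ne
  have hsq : ∀ p q : ℝ, 0 < p → 0 < q → p ^ 2 = q ^ 2 → p = q := by
    intro p q hp hq h; nlinarith
  have hainj2 : Function.Injective fun j => a j ^ 2 := by
    intro i j h
    have h2 : a i = a j := hsq _ _ (hapos i) (hapos j) h
    exact Fin.castSucc_injective n (hinj h2)
  have hbne2 : ∀ j, b ^ 2 - a j ^ 2 ≠ 0 := by
    intro j h
    have : a j = b := hsq _ _ (hapos j) hbpos (by linarith)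
    exact hane j this
  -- the nonvanishing claim
  have hne : (2 * (n : ℝ) + 3) * b ^ 2 * ∏ j, (b ^ 2 - a j ^ 2) ≠ 0 := by
    refine mul_ne_zero (mul_ne_zero (by positivity) (by positivity)) ?_
    exact Finset.prod_ne_zero_iff.mpr fun j _ => hbne2 j
  -- inverse function theorem setup
  have hinjL : Function.Injective (Lmap a b) := Lmap_injective a b hapos hainj2
  have hinj' : Function.Injective ((Lmap a b).toLinearMap) := hinjL
  have hsurj : Function.Surjective ((Lmap a b).toLinearMap) :=
    LinearMap.injective_iff_surjective.mp hinj'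
  let eL : ((Fin n → ℝ) × ℝ) ≃L[ℝ] ((Fin n → ℝ) × ℝ) :=
    (LinearEquiv.ofBijective (Lmap a b).toLinearMap ⟨hinj', hsurj⟩).toContinuousLinearEquiv
  have heL : (eL : ((Fin n → ℝ) × ℝ) →L[ℝ] ((Fin n → ℝ) × ℝ)) = Lmap a b :=
    ContinuousLinearMap.ext fun p => rfl
  have hGat : ContDiffAt ℝ 1 (Gmap n) (a, b) := contDiff_Gmap.contDiffAt
  have hL' : HasFDerivAt (Gmap n) (eL : ((Fin n → ℝ) × ℝ) →L[ℝ] ((Fin n → ℝ) × ℝ)) (a, b) := by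
    rw [heL]; exact hasFDerivAt_Gmap a b
  set H : ((Fin n → ℝ) × ℝ) → ((Fin n → ℝ) × ℝ) := hGat.localInverse hL' one_ne_zero with hHdef
  have hHcd : ContDiffAt ℝ 1 H (Gmap n (a, b)) := hGat.to_localInverse hL' one_ne_zero
  have hHa : H (Gmap n (a, b)) = (a, b) := hGat.localInverse_apply_image hL' one_ne_zero
  have hri : {y | Gmap n (H y) = y} ∈ 𝓝 (Gmap n (a, b)) :=
    (hGat.hasStrictFDerivAt' hL' one_ne_zero).eventually_right_inverse
  obtain ⟨U, hU, hUcd⟩ := hHcd.contDiffOn le_rfl (by simp)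
  have hT : U ∩ {y | Gmap n (H y) = y} ∈ 𝓝 (Gmap n (a, b)) := Filter.inter_mem hU hri
  set c : Fin n → ℝ := fun k => (∑ j, a j ^ (2 * (k : ℕ) + 3)) + b ^ (2 * (k : ℕ) + 3)
    with hcdef
  have hGab : Gmap n (a, b) = (c, b) := by rw [Gmap_def]
  have hcont : Continuous fun t : ℝ => ((c, t) : (Fin n → ℝ) × ℝ) :=
    continuous_const.prodMk continuous_id
  have hpre : (fun t : ℝ => ((c, t) : (Fin n → ℝ) × ℝ)) ⁻¹'
      (U ∩ {y | Gmap n (H y) = y}) ∈ 𝓝 b := by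
    refine hcont.continuousAt.preimage_mem_nhds ?_
    show U ∩ {y | Gmap n (H y) = y} ∈ 𝓝 ((c, b) : (Fin n → ℝ) × ℝ)
    rw [← hGab]
    exact hT
  obtain ⟨ε, hε, hball⟩ := Metric.mem_nhds_iff.mp hpre
  have hmemIoo : ∀ t ∈ Ioo (b - ε) (b + ε),
      ((c, t) : (Fin n → ℝ) × ℝ) ∈ U ∩ {y | Gmap n (H y) = y} := by
    intro t ht
    exact hball (by rwa [Real.ball_eq_Ioo])
  set x : Fin n → ℝ → ℝ := fun j t => (H (c, t)).1 j with hxdef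
  -- C¹ regularity
  have hxC1 : ∀ j, ContDiffOn ℝ 1 (x j) (Ioo (b - ε) (b + ε)) := by
    intro j
    have h1 : ContDiffOn ℝ 1 (fun t : ℝ => H (c, t)) (Ioo (b - ε) (b + ε)) := by
      refine hUcd.comp ((contDiff_const.prodMk contDiff_id).contDiffOn) ?_
      exact fun t ht => (hmemIoo t ht).1
    exact (((ContinuousLinearMap.proj j).comp
      (ContinuousLinearMap.fst ℝ (Fin n → ℝ) ℝ)).contDiff.comp_contDiffOn h1)
  -- value at b
  have hxb : ∀ j, x j b = a j := by
    intro j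
    have : H (c, b) = (a, b) := by rw [← hGab]; exact hHa
    simp [hxdef, this]
  -- the constraints
  have hcons : ∀ k : ℕ, 1 ≤ k → k ≤ n → ∀ t ∈ Ioo (b - ε) (b + ε),
      (∑ j, x j t ^ (2 * k + 1)) + t ^ (2 * k + 1) = ∑ i, β i ^ (2 * k + 1) := by
    intro k hk1 hkn t ht
    have heq : Gmap n (H (c, t)) = (c, t) := (hmemIoo t ht).2
    rw [Gmap_def] at heq
    have hsnd : (H (c, t)).2 = t := congrArg Prod.snd heq
    have hfst := congrFun (congrArg Prod.fst heq)
    set kf : Fin n := ⟨k - 1, by omega⟩ with hkfdef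
    have hexp : 2 * ((kf : ℕ)) + 3 = 2 * k + 1 := by
      simp only [hkfdef]
      omega
    have h1 := hfst kf
    simp only [hexp, hsnd] at h1
    -- h1 : (∑ j, (H (c,t)).1 j ^ (2k+1)) + t ^ (2k+1) = c kf
    have hck : c kf = (∑ j, a j ^ (2 * k + 1)) + b ^ (2 * k + 1) := by
      simp only [hcdef, hexp]
    rw [Fin.sum_univ_castSucc]
    calc (∑ j, x j t ^ (2 * k + 1)) + t ^ (2 * k + 1) = c kf := h1
      _ = (∑ j : Fin n, β j.castSucc ^ (2 * k + 1)) + β (Fin.last n) ^ (2 * k + 1) := hck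
  -- differentiability at b
  have hIoo : Ioo (b - ε) (b + ε) ∈ 𝓝 b := Ioo_mem_nhds (by linarith) (by linarith)
  have hdiff : ∀ j, DifferentiableAt ℝ (x j) b := fun j =>
    ((hxC1 j).differentiableOn one_ne_zero).differentiableAt hIoo
  set D : Fin n → ℝ := fun j => deriv (x j) b with hDdef
  have hhd : ∀ j, HasDerivAt (x j) (D j) b := fun j => (hdiff j).hasDerivAt
  -- relations from differentiating the constraints
  have hrel : ∀ k : ℕ, 1 ≤ k → k ≤ n →
      ∑ j, (a j ^ 2) ^ k * D j = -((b ^ 2) ^ k) := by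
    intro k hk1 hkn
    have hev : (fun t => (∑ j, x j t ^ (2 * k + 1)) + t ^ (2 * k + 1)) =ᶠ[𝓝 b]
        (fun _ => ∑ i, β i ^ (2 * k + 1)) :=
      Filter.eventuallyEq_of_mem hIoo fun t ht => hcons k hk1 hkn t ht
    have hd0 : deriv (fun t => (∑ j, x j t ^ (2 * k + 1)) + t ^ (2 * k + 1)) b = 0 := by
      rw [hev.deriv_eq]; exact deriv_const _ _
    have hdsum : HasDerivAt (fun t => (∑ j, x j t ^ (2 * k + 1)) + t ^ (2 * k + 1))
        ((∑ j, ((2 * k + 1 : ℕ) : ℝ) * (x j b) ^ (2 * k + 1 - 1) * D j) +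
          ((2 * k + 1 : ℕ) : ℝ) * b ^ (2 * k + 1 - 1)) b :=
      (HasDerivAt.fun_sum fun j _ => (hhd j).fun_pow _).fun_add (hasDerivAt_pow _ b)
    have hval := hdsum.deriv
    rw [hd0] at hval
    -- hval : 0 = value
    have hterm : ∀ j, ((2 * k + 1 : ℕ) : ℝ) * (x j b) ^ (2 * k + 1 - 1) * D j
        = ((2 * k + 1 : ℕ) : ℝ) * ((a j ^ 2) ^ k * D j) := by
      intro j
      rw [hxb j, show 2 * k + 1 - 1 = 2 * k from by omega, pow_mul]
      ring
    rw [Finset.sum_congr rfl fun j _ => hterm j, ← Finset.mul_sum,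
      show 2 * k + 1 - 1 = 2 * k from by omega, pow_mul] at hval
    have hc0 : ((2 * k + 1 : ℕ) : ℝ) ≠ 0 := by positivity
    have : ((2 * k + 1 : ℕ) : ℝ) * ((∑ j, (a j ^ 2) ^ k * D j) + (b ^ 2) ^ k) = 0 := by
      rw [mul_add]; linarith [hval]
    have h2 := (mul_eq_zero.mp this).resolve_left hc0
    linarith [h2]
  -- final derivative
  have hdfin : HasDerivAt (fun t => (∑ j, x j t ^ (2 * n + 3)) + t ^ (2 * n + 3))
      ((∑ j, ((2 * n + 3 : ℕ) : ℝ) * (x j b) ^ (2 * n + 3 - 1) * D j) +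
        ((2 * n + 3 : ℕ) : ℝ) * b ^ (2 * n + 3 - 1)) b :=
    (HasDerivAt.fun_sum fun j _ => (hhd j).fun_pow _).fun_add (hasDerivAt_pow _ b)
  have hkey := key_alg (fun j => a j ^ 2) (b ^ 2) D hrel
  have hvfin : (∑ j, ((2 * n + 3 : ℕ) : ℝ) * (x j b) ^ (2 * n + 3 - 1) * D j) +
        ((2 * n + 3 : ℕ) : ℝ) * b ^ (2 * n + 3 - 1)
      = (2 * (n : ℝ) + 3) * b ^ 2 * ∏ j, (b ^ 2 - a j ^ 2) := by
    have hterm : ∀ j, ((2 * n + 3 : ℕ) : ℝ) * (x j b) ^ (2 * n + 3 - 1) * D j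
        = ((2 * n + 3 : ℕ) : ℝ) * ((a j ^ 2) ^ (n + 1) * D j) := by
      intro j
      rw [hxb j, show 2 * n + 3 - 1 = 2 * (n + 1) from by omega, pow_mul]
      ring
    rw [Finset.sum_congr rfl fun j _ => hterm j, ← Finset.mul_sum,
      show 2 * n + 3 - 1 = 2 * (n + 1) from by omega, pow_mul]
    have hcast : ((2 * n + 3 : ℕ) : ℝ) = 2 * (n : ℝ) + 3 := by push_cast; ring
    rw [hcast]
    linear_combination (2 * (n : ℝ) + 3) * hkey
  have hderiv : deriv (fun t => (∑ j, x j t ^ (2 * n + 3)) + t ^ (2 * n + 3)) b =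
      (2 * (n : ℝ) + 3) * b ^ 2 * ∏ j, (b ^ 2 - a j ^ 2) := by
    rw [hdfin.deriv, hvfin]
  exact ⟨ε, hε, x, hxC1, hxb, hcons, hderiv, hne⟩
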